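/- arXiv:1312.3170 — 2 statements merged into one kernel-verified Lean document; each statement's English description precedes it below -/
import Mathlib

section
/- For all integers α, β ≥ 2 and all real numbers s_1, s_2 with 0 < s_2 < s_1 < 1, it holds that I_{α,β}(s_1,s_2) = 2(1-s_1)s_2 [ 2(α-1)(β-1)(s_1-s_2) I_{α-2,β-2}(s_1,s_2) + (α+β-1) I_{α-1,β-1}(s_1,s_2) ]. -/
open MeasureTheory Real

/-- One-dimensional Gaussian heat kernel. -/
noncomputable def g1 (t x : ℝ) : ℝ :=
  (4 * Real.pi * t) ^ (-(1 : ℝ) / 2) * Real.exp (-x ^ 2 / (4 * t))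

/-- `I_{α,β}(s₁,s₂) = ∫∫ x^α y^β g(1-s₁,x) g(s₁-s₂,x-y) g(s₂,y) dx dy`. -/
noncomputable def Iab (α β : ℕ) (s₁ s₂ : ℝ) : ℝ :=
  ∫ x : ℝ, ∫ y : ℝ, x ^ α * y ^ β * g1 (1 - s₁) x * g1 (s₁ - s₂) (x - y) * g1 s₂ y

open Filter

namespace IabAux

lemma g1_eq (t x : ℝ) :
    g1 t x = (4 * Real.pi * t) ^ (-(1 : ℝ) / 2) * Real.exp (-(1 / (4 * t)) * x ^ 2) := by
  unfold g1; congr 2; ring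

/-- monomial × Gaussian is integrable. -/
lemma integrable_pow_exp {b : ℝ} (hb : 0 < b) (n : ℕ) :
    Integrable fun x : ℝ => x ^ n * exp (-b * x ^ 2) := by
  have := integrable_rpow_mul_exp_neg_mul_sq hb (s := n)
    (lt_of_lt_of_le neg_one_lt_zero (Nat.cast_nonneg n))
  simpa [Real.rpow_natCast] using this

lemma tendsto_pow_exp_top {b : ℝ} (hb : 0 < b) (n : ℕ) :
    Tendsto (fun x : ℝ => x ^ n * exp (-b * x ^ 2)) atTop (nhds 0) := by
  have h := rpow_mul_exp_neg_mul_sq_isLittleO_exp_neg hb (n : ℝ)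
  have h2 : Tendsto (fun x : ℝ => exp (-(1/2) * x)) atTop (nhds 0) := by
    have h3 := Real.tendsto_exp_neg_atTop_nhds_zero.comp
      (tendsto_id.atTop_div_const (by norm_num : (0:ℝ) < 2))
    have e : (fun x : ℝ => exp (-(1/2) * x)) = (fun x : ℝ => exp (-x)) ∘ fun x : ℝ => id x / 2 := by
      funext x; simp only [Function.comp, id_eq]; congr 1; ring
    rw [e]; exact h3
  have := h.tendsto_zero_of_tendsto h2
  simpa [Real.rpow_natCast] using this

lemma tendsto_pow_exp_bot {b : ℝ} (hb : 0 < b) (n : ℕ) :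
    Tendsto (fun x : ℝ => x ^ n * exp (-b * x ^ 2)) atBot (nhds 0) := by
  have h := ((tendsto_pow_exp_top hb n).const_mul ((-1 : ℝ) ^ n)).comp tendsto_neg_atBot_atTop
  have e : (fun x : ℝ => x ^ n * exp (-b * x ^ 2))
      = (fun x : ℝ => (-1 : ℝ) ^ n * (x ^ n * exp (-b * x ^ 2))) ∘ fun x : ℝ => -x := by
    funext x
    simp only [Function.comp, neg_sq]
    rw [← mul_assoc, ← mul_pow]
    ring_nf
  rw [e]; simpa using h

/-- expand a shifted monomial into centered monomials. -/
lemma shift_repr (b c : ℝ) (n : ℕ) (x : ℝ) :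
    x ^ n * exp (-b * (x - c) ^ 2)
      = ∑ k ∈ Finset.range (n + 1),
          (c ^ (n - k) * (n.choose k : ℝ)) * ((x - c) ^ k * exp (-b * (x - c) ^ 2)) := by
  have h1 : x ^ n = ∑ k ∈ Finset.range (n + 1), (x - c) ^ k * c ^ (n - k) * (n.choose k : ℝ) := by
    rw [← add_pow]; norm_num
  rw [h1, Finset.sum_mul]
  exact Finset.sum_congr rfl fun k _ => by ring

lemma integrable_pow_gauss {t : ℝ} (ht : 0 < t) (c : ℝ) (n : ℕ) :
    Integrable fun x : ℝ => x ^ n * g1 t (x - c) := by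
  have hb : 0 < 1 / (4 * t) := by positivity
  have key : Integrable fun x : ℝ => x ^ n * exp (-(1 / (4 * t)) * (x - c) ^ 2) := by
    have : Integrable fun x : ℝ => ∑ k ∈ Finset.range (n + 1),
        (c ^ (n - k) * (n.choose k : ℝ)) * ((x - c) ^ k * exp (-(1 / (4 * t)) * (x - c) ^ 2)) := by
      apply integrable_finset_sum
      intro k _
      exact (((integrable_pow_exp hb k).comp_sub_right c)).const_mul _
    exact this.congr (Eventually.of_forall fun x => (shift_repr _ c n x).symm)
  simp_rw [g1_eq]
  exact (key.const_mul _).congr (Eventually.of_forall fun x => by ring)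

lemma tendsto_pow_gauss_top {t : ℝ} (ht : 0 < t) (c : ℝ) (n : ℕ) :
    Tendsto (fun x : ℝ => x ^ n * g1 t (x - c)) atTop (nhds 0) := by
  have hb : 0 < 1 / (4 * t) := by positivity
  have key : Tendsto (fun x : ℝ => x ^ n * exp (-(1 / (4 * t)) * (x - c) ^ 2)) atTop (nhds 0) := by
    have hsum : Tendsto (fun x : ℝ => ∑ k ∈ Finset.range (n + 1),
        (c ^ (n - k) * (n.choose k : ℝ)) * ((x - c) ^ k * exp (-(1 / (4 * t)) * (x - c) ^ 2)))
        atTop (nhds 0) := by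
      have : Tendsto (fun x : ℝ => x - c) atTop atTop :=
        tendsto_atTop_add_const_right atTop (-c) tendsto_id
      have hterm : ∀ k : ℕ, Tendsto (fun x : ℝ =>
          (c ^ (n - k) * (n.choose k : ℝ)) * ((x - c) ^ k * exp (-(1 / (4 * t)) * (x - c) ^ 2)))
          atTop (nhds 0) := by
        intro k
        have := ((tendsto_pow_exp_top hb k).comp this).const_mul (c ^ (n - k) * (n.choose k : ℝ))
        simpa [Function.comp] using this
      have h0 : Tendsto (fun x : ℝ => ∑ k ∈ Finset.range (n + 1),
          (fun x : ℝ => (c ^ (n - k) * (n.choose k : ℝ)) *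
            ((x - c) ^ k * exp (-(1 / (4 * t)) * (x - c) ^ 2))) x) atTop (nhds 0) := by
        have := tendsto_finset_sum (Finset.range (n + 1)) (fun k _ => hterm k)
        simpa using this
      simpa using h0
    exact hsum.congr fun x => (shift_repr _ c n x).symm
  simp_rw [g1_eq]
  have := key.const_mul ((4 * Real.pi * t) ^ (-(1:ℝ) / 2))
  simpa [mul_comm, mul_assoc, mul_left_comm] using this

lemma tendsto_pow_gauss_bot {t : ℝ} (ht : 0 < t) (c : ℝ) (n : ℕ) :
    Tendsto (fun x : ℝ => x ^ n * g1 t (x - c)) atBot (nhds 0) := by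
  have hb : 0 < 1 / (4 * t) := by positivity
  have key : Tendsto (fun x : ℝ => x ^ n * exp (-(1 / (4 * t)) * (x - c) ^ 2)) atBot (nhds 0) := by
    have hsum : Tendsto (fun x : ℝ => ∑ k ∈ Finset.range (n + 1),
        (c ^ (n - k) * (n.choose k : ℝ)) * ((x - c) ^ k * exp (-(1 / (4 * t)) * (x - c) ^ 2)))
        atBot (nhds 0) := by
      have : Tendsto (fun x : ℝ => x - c) atBot atBot :=
        tendsto_atBot_add_const_right atBot (-c) tendsto_id
      have hterm : ∀ k : ℕ, Tendsto (fun x : ℝ =>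
          (c ^ (n - k) * (n.choose k : ℝ)) * ((x - c) ^ k * exp (-(1 / (4 * t)) * (x - c) ^ 2)))
          atBot (nhds 0) := by
        intro k
        have := ((tendsto_pow_exp_bot hb k).comp this).const_mul (c ^ (n - k) * (n.choose k : ℝ))
        simpa [Function.comp] using this
      have h0 := tendsto_finset_sum (Finset.range (n + 1)) (fun k (_ : k ∈ Finset.range (n+1)) => hterm k)
      simpa using h0
    exact hsum.congr fun x => (shift_repr _ c n x).symm
  simp_rw [g1_eq]
  have := key.const_mul ((4 * Real.pi * t) ^ (-(1:ℝ) / 2))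
  simpa [mul_comm, mul_assoc, mul_left_comm] using this

end IabAux

namespace IabAux

/-- FTC on the whole real line: integral of a derivative vanishing at both infinities is zero. -/
lemma integral_deriv_eq_zero' (F F' : ℝ → ℝ) (hd : ∀ x, HasDerivAt F (F' x) x)
    (hi : Integrable F') (htop : Tendsto F atTop (nhds 0)) (hbot : Tendsto F atBot (nhds 0)) :
    ∫ x, F' x = 0 := by
  have hIoi : ∫ x in Set.Ioi (0:ℝ), F' x = 0 - F 0 :=
    integral_Ioi_of_hasDerivAt_of_tendsto' (fun x _ => hd x) hi.integrableOn htop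
  have hIic : ∫ x in Set.Iic (0:ℝ), F' x = F 0 := by
    have hG : ∀ x : ℝ, HasDerivAt (fun y => F (-y)) (-F' (-x)) x := by
      intro x
      have := (hd (-x)).comp x (hasDerivAt_neg x)
      exact this.congr_deriv (by ring)
    have hGi : Integrable fun x : ℝ => -F' (-x) := (hi.comp_neg).neg
    have htop' : Tendsto (fun y : ℝ => F (-y)) atTop (nhds 0) := hbot.comp tendsto_neg_atTop_atBot
    have h3 : ∫ x in Set.Ioi (0:ℝ), -F' (-x) = 0 - F (-0) :=
      integral_Ioi_of_hasDerivAt_of_tendsto' (fun x _ => hG x) hGi.integrableOn htop'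
    rw [integral_neg] at h3
    have h4 : ∫ x in Set.Ioi (0:ℝ), F' (-x) = F 0 := by
      simp only [neg_zero] at h3; linarith
    rw [← h4, integral_comp_neg_Ioi]
    norm_num
  have hsum := intervalIntegral.integral_Iic_add_Ioi (b := (0:ℝ)) hi.integrableOn hi.integrableOn
  rw [← hsum, hIic, hIoi]; ring

lemma hasDerivAt_gauss {t : ℝ} (ht : 0 < t) (c x : ℝ) :
    HasDerivAt (fun x => g1 t (x - c)) (-((x - c) / (2 * t)) * g1 t (x - c)) x := by
  have h1 : HasDerivAt (fun x : ℝ => -(1 / (4 * t)) * (x - c) ^ 2)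
      (-(1 / (4 * t)) * (2 * (x - c))) x := by
    have h0 : HasDerivAt (fun x : ℝ => (x - c) ^ 2) (2 * (x - c) ^ 1 * 1) x := by
      exact ((hasDerivAt_id x).sub_const c).pow 2
    have := h0.const_mul (-(1 / (4 * t)))
    exact this.congr_deriv (by ring)
  have h2 := h1.exp.const_mul ((4 * Real.pi * t) ^ (-(1:ℝ) / 2))
  have e : (fun x => g1 t (x - c))
      = fun x => (4 * Real.pi * t) ^ (-(1:ℝ) / 2) * exp (-(1 / (4 * t)) * (x - c) ^ 2) := by
    funext x; exact g1_eq t (x - c)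
  rw [e]
  refine h2.congr_deriv ?_
  rw [g1_eq]
  field_simp
  ring

lemma gauss_moment_zero {t : ℝ} (ht : 0 < t) (c : ℝ) : ∫ x : ℝ, g1 t (x - c) = 1 := by
  have h1 : ∫ x : ℝ, g1 t (x - c) = ∫ x : ℝ, g1 t x := integral_sub_right_eq_self (g1 t) c
  have hb : 0 < 1 / (4 * t) := by positivity
  have h2 : ∫ x : ℝ, g1 t x
      = (4 * Real.pi * t) ^ (-(1:ℝ) / 2) * ∫ x : ℝ, exp (-(1 / (4 * t)) * x ^ 2) := by
    simp_rw [g1_eq]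
    exact integral_const_mul _ _
  rw [h1, h2, integral_gaussian]
  have h3 : Real.pi / (1 / (4 * t)) = 4 * Real.pi * t := by
    field_simp
  rw [h3, Real.sqrt_eq_rpow, ← Real.rpow_add (by positivity)]
  norm_num

end IabAux

namespace IabAux

lemma integrable_gauss {t : ℝ} (ht : 0 < t) (c : ℝ) : Integrable fun x : ℝ => g1 t (x - c) := by
  simpa using integrable_pow_gauss ht c 0

lemma gauss_moment_one {t : ℝ} (ht : 0 < t) (c : ℝ) : ∫ x : ℝ, x * g1 t (x - c) = c := by
  set D : ℝ → ℝ := fun x => c * g1 t (x - c) - x * g1 t (x - c) with hD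
  have hd : ∀ x, HasDerivAt (fun x => 2 * t * g1 t (x - c)) (D x) x := by
    intro x
    have := (hasDerivAt_gauss ht c x).const_mul (2 * t)
    refine this.congr_deriv ?_
    simp only [hD]
    field_simp
    ring
  have hint1 : Integrable fun x : ℝ => x * g1 t (x - c) := by
    simpa using integrable_pow_gauss ht c 1
  have hi : Integrable D := ((integrable_gauss ht c).const_mul c).sub hint1
  have htop : Tendsto (fun x => 2 * t * g1 t (x - c)) atTop (nhds 0) := by
    have := (tendsto_pow_gauss_top ht c 0).const_mul (2 * t)
    simpa using this
  have hbot : Tendsto (fun x => 2 * t * g1 t (x - c)) atBot (nhds 0) := by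
    have := (tendsto_pow_gauss_bot ht c 0).const_mul (2 * t)
    simpa using this
  have h0 : ∫ x, D x = 0 := integral_deriv_eq_zero' _ _ hd hi htop hbot
  rw [hD] at h0
  rw [integral_sub ((integrable_gauss ht c).const_mul c) hint1, integral_const_mul,
    gauss_moment_zero ht c] at h0
  linarith

lemma gauss_moment_rec {t : ℝ} (ht : 0 < t) (c : ℝ) (n : ℕ) :
    ∫ x : ℝ, x ^ (n + 2) * g1 t (x - c)
      = c * (∫ x : ℝ, x ^ (n + 1) * g1 t (x - c))
        + 2 * t * ((n : ℝ) + 1) * ∫ x : ℝ, x ^ n * g1 t (x - c) := by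
  have h1 : Integrable fun x : ℝ => (2 * t * ((n : ℝ) + 1)) * (x ^ n * g1 t (x - c)) :=
    (integrable_pow_gauss ht c n).const_mul _
  have h2 : Integrable fun x : ℝ => c * (x ^ (n + 1) * g1 t (x - c)) :=
    (integrable_pow_gauss ht c (n + 1)).const_mul c
  have h12 : Integrable fun x : ℝ =>
      (2 * t * ((n : ℝ) + 1)) * (x ^ n * g1 t (x - c)) + c * (x ^ (n + 1) * g1 t (x - c)) :=
    h1.add h2
  have hd : ∀ x, HasDerivAt (fun x => 2 * t * (x ^ (n + 1) * g1 t (x - c)))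
      ((2 * t * ((n : ℝ) + 1)) * (x ^ n * g1 t (x - c)) + c * (x ^ (n + 1) * g1 t (x - c))
        - x ^ (n + 2) * g1 t (x - c)) x := by
    intro x
    have hmul := (hasDerivAt_pow (n + 1) x).mul (hasDerivAt_gauss ht c x)
    have := hmul.const_mul (2 * t)
    refine this.congr_deriv ?_
    simp only [Nat.add_sub_cancel]
    field_simp
    push_cast
    ring
  have hi : Integrable fun x : ℝ =>
      (2 * t * ((n : ℝ) + 1)) * (x ^ n * g1 t (x - c)) + c * (x ^ (n + 1) * g1 t (x - c))
        - x ^ (n + 2) * g1 t (x - c) := h12.sub (integrable_pow_gauss ht c (n + 2))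
  have htop : Tendsto (fun x => 2 * t * (x ^ (n + 1) * g1 t (x - c))) atTop (nhds 0) := by
    have := (tendsto_pow_gauss_top ht c (n + 1)).const_mul (2 * t)
    simpa using this
  have hbot : Tendsto (fun x => 2 * t * (x ^ (n + 1) * g1 t (x - c))) atBot (nhds 0) := by
    have := (tendsto_pow_gauss_bot ht c (n + 1)).const_mul (2 * t)
    simpa using this
  have h0 : ∫ x : ℝ, ((2 * t * ((n : ℝ) + 1)) * (x ^ n * g1 t (x - c))
      + c * (x ^ (n + 1) * g1 t (x - c)) - x ^ (n + 2) * g1 t (x - c)) = 0 :=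
    integral_deriv_eq_zero' _ _ hd hi htop hbot
  rw [integral_sub h12 (integrable_pow_gauss ht c (n + 2)), integral_add h1 h2,
    integral_const_mul, integral_const_mul] at h0
  linarith

end IabAux

/-- Conditional-moment polynomials. -/
noncomputable def P (κ τ : ℝ) : ℕ → ℝ → ℝ
  | 0 => fun _ => 1
  | 1 => fun x => κ * x
  | n + 2 => fun x => κ * x * P κ τ (n + 1) x + 2 * τ * ((n : ℝ) + 1) * P κ τ n x

namespace IabAux

lemma P_succ (κ τ : ℝ) (n : ℕ) (x : ℝ) :
    P κ τ (n + 1) x = κ * x * P κ τ n x + 2 * τ * (n : ℝ) * P κ τ (n - 1) x := by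
  cases n with
  | zero => simp [P]
  | succ m => simp only [P, Nat.succ_sub_one]; push_cast; ring

lemma integral_pow_gauss_eq_P {τ : ℝ} (hτ : 0 < τ) (κ : ℝ) (n : ℕ) (x : ℝ) :
    ∫ y : ℝ, y ^ n * g1 τ (y - κ * x) = P κ τ n x := by
  induction n using Nat.twoStepInduction with
  | zero =>
    simp only [pow_zero, one_mul, P]
    exact gauss_moment_zero hτ _
  | one =>
    simp only [pow_one, P]
    exact gauss_moment_one hτ _
  | more n ih1 ih2 =>
    rw [gauss_moment_rec hτ (κ * x) n, ih1, ih2]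
    simp [P]

lemma P_hasDerivAt (κ τ : ℝ) (n : ℕ) (x : ℝ) :
    HasDerivAt (fun x => P κ τ n x) (κ * (n : ℝ) * P κ τ (n - 1) x) x := by
  induction n using Nat.twoStepInduction generalizing x with
  | zero =>
    simp only [P, Nat.cast_zero]
    simpa using hasDerivAt_const x (1 : ℝ)
  | one =>
    have h := (hasDerivAt_id x).const_mul κ
    have e : (fun x => P κ τ 1 x) = fun x : ℝ => κ * id x := by funext y; simp [P]
    rw [e]
    refine h.congr_deriv ?_
    simp [P]
  | more n ih1 ih2 =>
    have hx : HasDerivAt (fun x : ℝ => κ * x) κ x := by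
      simpa using (hasDerivAt_id x).const_mul κ
    have h1 := (hx.mul (ih2 x)).add ((ih1 x).const_mul (2 * τ * ((n : ℝ) + 1)))
    have e : (fun x => P κ τ (n + 2) x)
        = fun x => κ * x * P κ τ (n + 1) x + 2 * τ * ((n : ℝ) + 1) * P κ τ n x := by
      funext x; simp [P]
    rw [e]
    refine h1.congr_deriv ?_
    have hps := P_succ κ τ n x
    push_cast
    linear_combination (-(κ * ((n : ℝ) + 1))) * hps

lemma integrable_pgP {σ : ℝ} (hσ : 0 < σ) (κ τ : ℝ) (n : ℕ) :
    ∀ m : ℕ, Integrable fun x : ℝ => x ^ m * g1 σ x * P κ τ n x := by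
  induction n using Nat.twoStepInduction with
  | zero =>
    intro m
    have := integrable_pow_gauss hσ 0 m
    apply this.congr
    filter_upwards with x
    simp [P]
  | one =>
    intro m
    have := (integrable_pow_gauss hσ 0 (m + 1)).const_mul κ
    apply this.congr
    filter_upwards with x
    simp only [P, sub_zero]
    ring
  | more n ih1 ih2 =>
    intro m
    have := ((ih2 (m + 1)).const_mul κ).add ((ih1 m).const_mul (2 * τ * ((n : ℝ) + 1)))
    apply this.congr
    filter_upwards with x
    simp only [Pi.add_apply, P]
    ring

lemma tendsto_pgP_top {σ : ℝ} (hσ : 0 < σ) (κ τ : ℝ) (n : ℕ) :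
    ∀ m : ℕ, Tendsto (fun x : ℝ => x ^ m * g1 σ x * P κ τ n x) atTop (nhds 0) := by
  induction n using Nat.twoStepInduction with
  | zero =>
    intro m
    have := tendsto_pow_gauss_top hσ 0 m
    apply this.congr
    intro x; simp [P]
  | one =>
    intro m
    have := (tendsto_pow_gauss_top hσ 0 (m + 1)).const_mul κ
    rw [mul_zero] at this
    apply this.congr
    intro x; simp only [P, sub_zero]; ring
  | more n ih1 ih2 =>
    intro m
    have h := ((ih2 (m + 1)).const_mul κ).add ((ih1 m).const_mul (2 * τ * ((n : ℝ) + 1)))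
    rw [mul_zero, mul_zero, add_zero] at h
    apply h.congr
    intro x; simp only [Pi.add_apply, P]; ring

lemma tendsto_pgP_bot {σ : ℝ} (hσ : 0 < σ) (κ τ : ℝ) (n : ℕ) :
    ∀ m : ℕ, Tendsto (fun x : ℝ => x ^ m * g1 σ x * P κ τ n x) atBot (nhds 0) := by
  induction n using Nat.twoStepInduction with
  | zero =>
    intro m
    have := tendsto_pow_gauss_bot hσ 0 m
    apply this.congr
    intro x; simp [P]
  | one =>
    intro m
    have := (tendsto_pow_gauss_bot hσ 0 (m + 1)).const_mul κ
    rw [mul_zero] at this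
    apply this.congr
    intro x; simp only [P, sub_zero]; ring
  | more n ih1 ih2 =>
    intro m
    have h := ((ih2 (m + 1)).const_mul κ).add ((ih1 m).const_mul (2 * τ * ((n : ℝ) + 1)))
    rw [mul_zero, mul_zero, add_zero] at h
    apply h.congr
    intro x; simp only [Pi.add_apply, P]; ring

end IabAux

namespace IabAux

lemma hasDerivAt_gauss0 {t : ℝ} (ht : 0 < t) (x : ℝ) :
    HasDerivAt (fun x => g1 t x) (-(x / (2 * t)) * g1 t x) x := by
  have := hasDerivAt_gauss ht 0 x
  simpa using this

lemma steinX {σ : ℝ} (hσ : 0 < σ) (κ τ : ℝ) (m n : ℕ) :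
    ∫ x : ℝ, x ^ (m + 2) * g1 σ x * P κ τ n x
      = 2 * σ * ((m : ℝ) + 1) * (∫ x : ℝ, x ^ m * g1 σ x * P κ τ n x)
        + 2 * σ * κ * (n : ℝ) * ∫ x : ℝ, x ^ (m + 1) * g1 σ x * P κ τ (n - 1) x := by
  have hA : Integrable fun x : ℝ => (2 * σ * ((m : ℝ) + 1)) * (x ^ m * g1 σ x * P κ τ n x) :=
    (integrable_pgP hσ κ τ n m).const_mul _
  have hB : Integrable fun x : ℝ => x ^ (m + 2) * g1 σ x * P κ τ n x :=
    integrable_pgP hσ κ τ n (m + 2)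
  have hC : Integrable fun x : ℝ =>
      (2 * σ * κ * (n : ℝ)) * (x ^ (m + 1) * g1 σ x * P κ τ (n - 1) x) :=
    (integrable_pgP hσ κ τ (n - 1) (m + 1)).const_mul _
  have hAB : Integrable fun x : ℝ =>
      (2 * σ * ((m : ℝ) + 1)) * (x ^ m * g1 σ x * P κ τ n x)
        - x ^ (m + 2) * g1 σ x * P κ τ n x := hA.sub hB
  have hd : ∀ x, HasDerivAt (fun x => 2 * σ * (x ^ (m + 1) * g1 σ x * P κ τ n x))
      ((2 * σ * ((m : ℝ) + 1)) * (x ^ m * g1 σ x * P κ τ n x)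
        - x ^ (m + 2) * g1 σ x * P κ τ n x
        + (2 * σ * κ * (n : ℝ)) * (x ^ (m + 1) * g1 σ x * P κ τ (n - 1) x)) x := by
    intro x
    have h := (((hasDerivAt_pow (m + 1) x).mul (hasDerivAt_gauss0 hσ x)).mul
      (P_hasDerivAt κ τ n x)).const_mul (2 * σ)
    refine h.congr_deriv ?_
    simp only [Nat.add_sub_cancel, Pi.mul_apply]
    field_simp
    push_cast
    ring
  have hi : Integrable fun x : ℝ =>
      (2 * σ * ((m : ℝ) + 1)) * (x ^ m * g1 σ x * P κ τ n x)
        - x ^ (m + 2) * g1 σ x * P κ τ n x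
        + (2 * σ * κ * (n : ℝ)) * (x ^ (m + 1) * g1 σ x * P κ τ (n - 1) x) := hAB.add hC
  have htop : Tendsto (fun x => 2 * σ * (x ^ (m + 1) * g1 σ x * P κ τ n x)) atTop (nhds 0) := by
    have := (tendsto_pgP_top hσ κ τ n (m + 1)).const_mul (2 * σ)
    simpa using this
  have hbot : Tendsto (fun x => 2 * σ * (x ^ (m + 1) * g1 σ x * P κ τ n x)) atBot (nhds 0) := by
    have := (tendsto_pgP_bot hσ κ τ n (m + 1)).const_mul (2 * σ)
    simpa using this
  have h0 : ∫ x : ℝ, ((2 * σ * ((m : ℝ) + 1)) * (x ^ m * g1 σ x * P κ τ n x)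
        - x ^ (m + 2) * g1 σ x * P κ τ n x
        + (2 * σ * κ * (n : ℝ)) * (x ^ (m + 1) * g1 σ x * P κ τ (n - 1) x)) = 0 :=
    integral_deriv_eq_zero' _ _ hd hi htop hbot
  rw [integral_add hAB hC, integral_sub hA hB, integral_const_mul, integral_const_mul] at h0
  linarith

lemma steinY {σ : ℝ} (hσ : 0 < σ) (κ τ : ℝ) (m n : ℕ) :
    ∫ x : ℝ, x ^ m * g1 σ x * P κ τ (n + 2) x
      = κ * (∫ x : ℝ, x ^ (m + 1) * g1 σ x * P κ τ (n + 1) x)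
        + 2 * τ * ((n : ℝ) + 1) * ∫ x : ℝ, x ^ m * g1 σ x * P κ τ n x := by
  have h1 : Integrable fun x : ℝ => κ * (x ^ (m + 1) * g1 σ x * P κ τ (n + 1) x) :=
    (integrable_pgP hσ κ τ (n + 1) (m + 1)).const_mul κ
  have h2 : Integrable fun x : ℝ =>
      (2 * τ * ((n : ℝ) + 1)) * (x ^ m * g1 σ x * P κ τ n x) :=
    (integrable_pgP hσ κ τ n m).const_mul _
  have e : (fun x : ℝ => x ^ m * g1 σ x * P κ τ (n + 2) x)
      =ᵐ[volume] fun x : ℝ => κ * (x ^ (m + 1) * g1 σ x * P κ τ (n + 1) x)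
        + (2 * τ * ((n : ℝ) + 1)) * (x ^ m * g1 σ x * P κ τ n x) := by
    filter_upwards with x
    simp only [P]
    ring
  rw [integral_congr_ae e, integral_add h1 h2, integral_const_mul, integral_const_mul]

lemma g1_conv {q r : ℝ} (hq : 0 < q) (hr : 0 < r) (x y : ℝ) :
    g1 q (x - y) * g1 r y
      = g1 (q + r) x * g1 (q * r / (q + r)) (y - r / (q + r) * x) := by
  have hqr : 0 < q + r := by linarith
  have hπ : 0 < Real.pi := Real.pi_pos
  unfold g1
  rw [mul_mul_mul_comm, mul_mul_mul_comm ((4 * Real.pi * (q + r)) ^ (-(1:ℝ)/2))]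
  congr 1
  · rw [← Real.mul_rpow (by positivity) (by positivity),
      ← Real.mul_rpow (by positivity) (by positivity)]
    congr 1
    field_simp
  · rw [← Real.exp_add, ← Real.exp_add]
    congr 1
    field_simp
    ring

lemma g1_mul_self {p s : ℝ} (hp : 0 < p) (hs : 0 < s) (x : ℝ) :
    g1 p x * g1 s x = g1 (p + s) 0 * g1 (p * s / (p + s)) x := by
  have hps : 0 < p + s := by linarith
  have hπ : 0 < Real.pi := Real.pi_pos
  unfold g1
  rw [mul_mul_mul_comm, mul_mul_mul_comm ((4 * Real.pi * (p + s)) ^ (-(1:ℝ)/2))]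
  congr 1
  · rw [← Real.mul_rpow (by positivity) (by positivity),
      ← Real.mul_rpow (by positivity) (by positivity)]
    congr 1
    field_simp
  · rw [← Real.exp_add, ← Real.exp_add]
    congr 1
    field_simp
    ring

end IabAux

namespace IabAux

lemma Iab_repr {s₁ s₂ : ℝ} (h₀ : 0 < s₂) (h₁ : s₂ < s₁) (h₂ : s₁ < 1) (m n : ℕ) :
    Iab m n s₁ s₂
      = g1 1 0 * ∫ x : ℝ, x ^ m * g1 ((1 - s₁) * s₁) x
          * P (s₂ / s₁) ((s₁ - s₂) * s₂ / s₁) n x := by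
  have hs1 : 0 < s₁ := h₀.trans h₁
  have hp : 0 < 1 - s₁ := by linarith
  have hq : 0 < s₁ - s₂ := by linarith
  have hτ : 0 < (s₁ - s₂) * s₂ / s₁ := by positivity
  have key : ∀ x : ℝ, (∫ y : ℝ, x ^ m * y ^ n * g1 (1 - s₁) x * g1 (s₁ - s₂) (x - y) * g1 s₂ y)
      = g1 1 0 * (x ^ m * g1 ((1 - s₁) * s₁) x * P (s₂ / s₁) ((s₁ - s₂) * s₂ / s₁) n x) := by
    intro x
    have e : ∀ y : ℝ, x ^ m * y ^ n * g1 (1 - s₁) x * g1 (s₁ - s₂) (x - y) * g1 s₂ y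
        = (x ^ m * g1 (1 - s₁) x * g1 s₁ x)
            * (y ^ n * g1 ((s₁ - s₂) * s₂ / s₁) (y - s₂ / s₁ * x)) := by
      intro y
      have h := g1_conv hq h₀ x y
      rw [show s₁ - s₂ + s₂ = s₁ by ring] at h
      linear_combination (x ^ m * y ^ n * g1 (1 - s₁) x) * h
    have e2 : (∫ y : ℝ, x ^ m * y ^ n * g1 (1 - s₁) x * g1 (s₁ - s₂) (x - y) * g1 s₂ y)
        = ∫ y : ℝ, (x ^ m * g1 (1 - s₁) x * g1 s₁ x)
            * (y ^ n * g1 ((s₁ - s₂) * s₂ / s₁) (y - s₂ / s₁ * x)) :=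
      integral_congr_ae (Filter.Eventually.of_forall e)
    rw [e2, integral_const_mul, integral_pow_gauss_eq_P hτ (s₂ / s₁) n x]
    have h2 := g1_mul_self hp hs1 x
    rw [show 1 - s₁ + s₁ = 1 by ring, show (1 - s₁) * s₁ / 1 = (1 - s₁) * s₁ by rw [div_one]] at h2
    linear_combination (x ^ m * P (s₂ / s₁) ((s₁ - s₂) * s₂ / s₁) n x) * h2
  unfold Iab
  simp_rw [key]
  rw [integral_const_mul]

end IabAux

open IabAux

theorem Iab_rec_ii (α β : ℕ) (hα : 2 ≤ α) (hβ : 2 ≤ β)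
    (s₁ s₂ : ℝ) (h₀ : 0 < s₂) (h₁ : s₂ < s₁) (h₂ : s₁ < 1) :
    Iab α β s₁ s₂ =
      2 * (1 - s₁) * s₂ *
        (2 * ((α : ℝ) - 1) * ((β : ℝ) - 1) * (s₁ - s₂) * Iab (α - 2) (β - 2) s₁ s₂ +
          ((α : ℝ) + (β : ℝ) - 1) * Iab (α - 1) (β - 1) s₁ s₂) := by
  obtain ⟨A, rfl⟩ : ∃ A, α = A + 2 := ⟨α - 2, by omega⟩
  obtain ⟨B, rfl⟩ : ∃ B, β = B + 2 := ⟨β - 2, by omega⟩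
  have hs1 : 0 < s₁ := h₀.trans h₁
  have hs1' : s₁ ≠ 0 := ne_of_gt hs1
  have hσ : 0 < (1 - s₁) * s₁ := by nlinarith
  set σ := (1 - s₁) * s₁ with hσdef
  set κ := s₂ / s₁ with hκdef
  set τ := (s₁ - s₂) * s₂ / s₁ with hτdef
  have h1 := Iab_repr h₀ h₁ h₂ (A + 2) (B + 2)
  have h2 := Iab_repr h₀ h₁ h₂ (A + 1) (B + 1)
  have h3 := Iab_repr h₀ h₁ h₂ A B
  have hJX := steinX hσ κ τ A (B + 2)
  have hJY := steinY hσ κ τ A B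
  simp only [show A + 2 - 2 = A from rfl, show B + 2 - 2 = B from rfl,
    show A + 2 - 1 = A + 1 from rfl, show B + 2 - 1 = B + 1 from rfl] at hJX ⊢
  rw [h1, h2, h3, hJX, hJY]
  have hσκ : σ * κ = (1 - s₁) * s₂ := by
    rw [hσdef, hκdef]; field_simp
  have hστ : σ * τ = (1 - s₁) * ((s₁ - s₂) * s₂) := by
    rw [hσdef, hτdef]; field_simp
  push_cast
  linear_combination
    (2 * ((A : ℝ) + (B : ℝ) + 3) * g1 1 0
        * (∫ x : ℝ, x ^ (A + 1) * g1 σ x * P κ τ (B + 1) x)) * hσκ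
      + (4 * ((A : ℝ) + 1) * ((B : ℝ) + 1) * g1 1 0
        * (∫ x : ℝ, x ^ A * g1 σ x * P κ τ B x)) * hστ
end

section
/- For every integer α ≥ 0 and all real numbers s_1, s_2 with 0 < s_2 < s_1 < 1, it holds that I_{2α,0}(s_1,s_2) = (4π)^{-1/2} ((2α)!/α!) s_1^α (1-s_1)^α. -/
open MeasureTheory Real

lemma rpow_neg_half_eq {a : ℝ} (ha : 0 < a) : a ^ (-(1 : ℝ)/2) = (Real.sqrt a)⁻¹ := by
  rw [neg_div, Real.rpow_neg ha.le, ← Real.sqrt_eq_rpow]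

lemma int_pow_exp {b : ℝ} (hb : 0 < b) (k : ℕ) :
    Integrable fun x : ℝ => x ^ k * Real.exp (-b * x ^ 2) := by
  have hk : (-1 : ℝ) < (k : ℝ) := by
    have : (0:ℝ) ≤ k := Nat.cast_nonneg k
    linarith
  simpa [Real.rpow_natCast] using integrable_rpow_mul_exp_neg_mul_sq hb hk

lemma moment_exp {b : ℝ} (hb : 0 < b) : ∀ n : ℕ,
    ∫ x : ℝ, x ^ (2*n) * Real.exp (-b * x ^ 2)
      = Real.sqrt (Real.pi / b) * (Nat.factorial (2*n)) / (Nat.factorial n * (4*b)^n) := by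
  intro n
  induction n with
  | zero => simpa using integral_gaussian b
  | succ n ih =>
    have h0 := int_pow_exp hb (2*n)
    have h2 := int_pow_exp hb (2*n+2)
    have h1 := int_pow_exp hb (2*n+1)
    have hderiv : ∀ x : ℝ, HasDerivAt (fun x : ℝ => x ^ (2*n+1) * Real.exp (-b * x ^ 2))
        ((2*n+1 : ℝ) * (x ^ (2*n) * Real.exp (-b * x ^ 2))
          - 2*b * (x ^ (2*n+2) * Real.exp (-b * x ^ 2))) x := by
      intro x
      have h := (hasDerivAt_pow (2*n+1) x).fun_mul (((hasDerivAt_pow 2 x).const_mul (-b)).exp)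
      refine h.congr_deriv ?_
      simp only [Nat.add_sub_cancel, pow_one]
      push_cast
      ring
    have hzero : ∫ x : ℝ, ((2*n+1 : ℝ) * (x ^ (2*n) * Real.exp (-b * x ^ 2))
        - 2*b * (x ^ (2*n+2) * Real.exp (-b * x ^ 2))) = 0 :=
      integral_eq_zero_of_hasDerivAt_of_integrable hderiv
        ((h0.const_mul _).sub (h2.const_mul _)) h1
    rw [integral_sub (h0.const_mul _) (h2.const_mul _), integral_const_mul,
      integral_const_mul, ih, sub_eq_zero] at hzero
    have h22 : 2*(n+1) = 2*n+2 := by ring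
    rw [h22]
    have hb2 : (2*b : ℝ) ≠ 0 := by positivity
    have key : ∫ x : ℝ, x ^ (2*n+2) * Real.exp (-b * x ^ 2)
        = (2*n+1 : ℝ) * (Real.sqrt (Real.pi / b) * (Nat.factorial (2*n))
            / (Nat.factorial n * (4*b)^n)) / (2*b) := by
      rw [eq_div_iff hb2]
      linear_combination -hzero
    rw [key]
    have hf2 : (Nat.factorial (2*(n+1)) : ℝ) = (2*n+2) * ((2*n+1) * Nat.factorial (2*n)) := by
      have h' : 2*(n+1) = (2*n+1)+1 := by ring
      rw [h', Nat.factorial_succ, Nat.factorial_succ]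
      push_cast; ring
    have hf1 : (Nat.factorial (n+1) : ℝ) = (n+1) * Nat.factorial n := by
      rw [Nat.factorial_succ]; push_cast; ring
    rw [show (2*n+2) = 2*(n+1) by ring, hf2, hf1]
    have hfn : (Nat.factorial n : ℝ) ≠ 0 := by exact_mod_cast Nat.factorial_ne_zero n
    have h4b : ((4*b : ℝ))^n ≠ 0 := by positivity
    field_simp
    ring

lemma gaussian_conv {b c : ℝ} (hb : 0 < b) (hc : 0 < c) (x : ℝ) :
    ∫ y : ℝ, g1 b (x - y) * g1 c y = g1 (b + c) x := by
  have hbc : 0 < b + c := by linarith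
  have hpi := Real.pi_pos
  have hk : 0 < (b + c) / (4 * b * c) := by positivity
  have key1 : ∀ y : ℝ, g1 b (x - y) * g1 c y
      = ((4 * Real.pi * b) ^ (-(1:ℝ)/2) * (4 * Real.pi * c) ^ (-(1:ℝ)/2)
          * Real.exp (-x ^ 2 / (4 * (b + c))))
        * Real.exp (-((b + c) / (4 * b * c)) * (y - c * x / (b + c)) ^ 2) := by
    intro y
    have he : -(x - y) ^ 2 / (4 * b) + -y ^ 2 / (4 * c)
        = -x ^ 2 / (4 * (b + c)) + -((b + c) / (4 * b * c)) * (y - c * x / (b + c)) ^ 2 := by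
      field_simp [hb.ne', hc.ne', hbc.ne']
      ring
    calc g1 b (x - y) * g1 c y
        = (4 * Real.pi * b) ^ (-(1:ℝ)/2) * (4 * Real.pi * c) ^ (-(1:ℝ)/2)
            * Real.exp (-(x - y) ^ 2 / (4 * b) + -y ^ 2 / (4 * c)) := by
          unfold g1; rw [Real.exp_add]; ring
      _ = (4 * Real.pi * b) ^ (-(1:ℝ)/2) * (4 * Real.pi * c) ^ (-(1:ℝ)/2)
            * Real.exp (-x ^ 2 / (4 * (b + c))
                + -((b + c) / (4 * b * c)) * (y - c * x / (b + c)) ^ 2) := by rw [he]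
      _ = _ := by rw [Real.exp_add]; ring
  simp only [key1]
  rw [integral_const_mul]
  rw [integral_sub_right_eq_self
    (fun y : ℝ => Real.exp (-((b + c) / (4 * b * c)) * y ^ 2)) (c * x / (b + c))]
  rw [integral_gaussian]
  have hco : Real.sqrt ((4 * Real.pi * b)⁻¹) * Real.sqrt ((4 * Real.pi * c)⁻¹)
      * Real.sqrt (Real.pi / ((b + c) / (4 * b * c)))
      = Real.sqrt ((4 * Real.pi * (b + c))⁻¹) := by
    rw [← Real.sqrt_mul (by positivity), ← Real.sqrt_mul (by positivity)]
    congr 1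
    field_simp
  unfold g1
  rw [rpow_neg_half_eq (by positivity), rpow_neg_half_eq (by positivity),
    rpow_neg_half_eq (by positivity), ← Real.sqrt_inv, ← Real.sqrt_inv, ← Real.sqrt_inv]
  calc Real.sqrt ((4*Real.pi*b)⁻¹) * Real.sqrt ((4*Real.pi*c)⁻¹) * Real.exp (-x^2/(4*(b+c)))
        * Real.sqrt (Real.pi / ((b+c)/(4*b*c)))
      = (Real.sqrt ((4*Real.pi*b)⁻¹) * Real.sqrt ((4*Real.pi*c)⁻¹)
          * Real.sqrt (Real.pi / ((b+c)/(4*b*c)))) * Real.exp (-x^2/(4*(b+c))) := by ring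
    _ = _ := by rw [hco]

lemma g1_mul_g1 {s : ℝ} (h0 : 0 < s) (h1 : s < 1) (x : ℝ) :
    g1 (1 - s) x * g1 s x = (4 * Real.pi) ^ (-(1:ℝ)/2) * g1 (s * (1 - s)) x := by
  have h1s : 0 < 1 - s := by linarith
  have hpi := Real.pi_pos
  have hcoef : (4*Real.pi*(1-s)) ^ (-(1:ℝ)/2) * (4*Real.pi*s) ^ (-(1:ℝ)/2)
      = (4*Real.pi) ^ (-(1:ℝ)/2) * (4*Real.pi*(s*(1-s))) ^ (-(1:ℝ)/2) := by
    rw [← Real.mul_rpow (by positivity) (by positivity),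
      ← Real.mul_rpow (by positivity) (by positivity)]
    congr 1
    ring
  have hexp : -x^2/(4*(1-s)) + -x^2/(4*s) = -x^2/(4*(s*(1-s))) := by
    field_simp [h0.ne', h1s.ne']
    ring
  unfold g1
  calc (4*Real.pi*(1-s)) ^ (-(1:ℝ)/2) * Real.exp (-x^2/(4*(1-s)))
        * ((4*Real.pi*s) ^ (-(1:ℝ)/2) * Real.exp (-x^2/(4*s)))
      = (4*Real.pi*(1-s)) ^ (-(1:ℝ)/2) * (4*Real.pi*s) ^ (-(1:ℝ)/2)
          * Real.exp (-x^2/(4*(1-s)) + -x^2/(4*s)) := by rw [Real.exp_add]; ring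
    _ = (4*Real.pi) ^ (-(1:ℝ)/2) * (4*Real.pi*(s*(1-s))) ^ (-(1:ℝ)/2)
          * Real.exp (-x^2/(4*(s*(1-s)))) := by rw [hcoef, hexp]
    _ = _ := by ring

lemma moment_g1 {t : ℝ} (ht : 0 < t) (n : ℕ) :
    ∫ x : ℝ, x ^ (2*n) * g1 t x
      = ((Nat.factorial (2*n) : ℝ) / (Nat.factorial n : ℝ)) * t ^ n := by
  have hpi := Real.pi_pos
  have hb : 0 < 1/(4*t) := by positivity
  have e : ∀ x : ℝ, x ^ (2*n) * g1 t x
      = (4*Real.pi*t) ^ (-(1:ℝ)/2) * (x ^ (2*n) * Real.exp (-(1/(4*t)) * x ^ 2)) := by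
    intro x; unfold g1
    rw [show -x^2/(4*t) = -(1/(4*t)) * x^2 by ring]
    ring
  simp only [e]
  rw [integral_const_mul, moment_exp hb n]
  rw [show Real.pi / (1/(4*t)) = 4*Real.pi*t by field_simp]
  rw [show (4*(1/(4*t)) : ℝ) = 1/t by field_simp]
  rw [rpow_neg_half_eq (by positivity)]
  have hs : Real.sqrt (4*Real.pi*t) ≠ 0 := by positivity
  have hfn : (Nat.factorial n : ℝ) ≠ 0 := by exact_mod_cast Nat.factorial_ne_zero n
  field_simp
  rw [← mul_pow, one_div, inv_mul_cancel₀ ht.ne', one_pow]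

theorem Iab_even_zero (α : ℕ) (s₁ s₂ : ℝ) (h₀ : 0 < s₂) (h₁ : s₂ < s₁) (h₂ : s₁ < 1) :
    Iab (2 * α) 0 s₁ s₂ =
      (4 * Real.pi) ^ (-(1 : ℝ) / 2) *
        ((Nat.factorial (2 * α) : ℝ) / (Nat.factorial α : ℝ)) * s₁ ^ α * (1 - s₁) ^ α := by
  have hb : 0 < s₁ - s₂ := by linarith
  have hs1 : 0 < s₁ := lt_trans h₀ h₁
  have h1s : 0 < 1 - s₁ := by linarith
  unfold Iab
  have inner : ∀ x : ℝ,
      (∫ y : ℝ, x ^ (2*α) * y ^ 0 * g1 (1-s₁) x * g1 (s₁-s₂) (x - y) * g1 s₂ y)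
        = x ^ (2*α) * (g1 (1-s₁) x * g1 s₁ x) := by
    intro x
    have e : ∀ y : ℝ, x ^ (2*α) * y ^ 0 * g1 (1-s₁) x * g1 (s₁-s₂) (x - y) * g1 s₂ y
        = (x ^ (2*α) * g1 (1-s₁) x) * (g1 (s₁-s₂) (x - y) * g1 s₂ y) := by
      intro y; ring
    simp only [e]
    rw [integral_const_mul, gaussian_conv hb h₀ x, show s₁ - s₂ + s₂ = s₁ by ring, mul_assoc]
  simp only [inner]
  simp only [g1_mul_g1 hs1 h₂]
  have e2 : ∀ x : ℝ, x ^ (2*α) * ((4*Real.pi) ^ (-(1:ℝ)/2) * g1 (s₁*(1-s₁)) x)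
      = (4*Real.pi) ^ (-(1:ℝ)/2) * (x ^ (2*α) * g1 (s₁*(1-s₁)) x) := by intro x; ring
  simp only [e2]
  rw [integral_const_mul, moment_g1 (mul_pos hs1 h1s) α, mul_pow]
  ring
end
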